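/- Let X₁ = Σ_μ ξ_{μ→μ+1} and X₂ = Σ_μ ξ_{μ→μ−1} in Ω¹(A) for the bidirected n-gon. Then in Ω²(A): X₁∧X₁ = 0, X₂∧X₂ = 0, and X₁∧X₂ = −X₂∧X₁ ≠ 0. Consequently the graded ring ℂ·1 ⊕ span{X₁,X₂} ⊕ span{X₁∧X₂} under the wedge product is isomorphic as a graded ℂ-algebra to the exterior algebra Λ•(ℂ²). -/

import Mathlib

/-- `Ω¹(A)` for the bidirected `n`-gon (edge `(μ,true)` is `μ→μ+1`, `(μ,false)` is `μ→μ−1`). -/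
abbrev Poly1 (n : ℕ) := ZMod n × Bool → ℂ

/-- ℂ-basis-coefficient model of `Ω¹ ⊗_A Ω¹`. -/
abbrev Poly2 (n : ℕ) := ZMod n × Bool × Bool → ℂ

/-- `ε(true) = 1`, `ε(false) = −1`. -/
def eps (n : ℕ) (d : Bool) : ZMod n := if d then 1 else -1

/-- the tensor representative: `(ω₁ ⊗ ω₂)(μ,d₁,d₂) = ω₁(μ,d₁) ω₂(μ+ε(d₁),d₂)`. -/
noncomputable def tens (n : ℕ) (ω₁ ω₂ : Poly1 n) : Poly2 n :=
  fun p => ω₁ (p.1, p.2.1) * ω₂ (p.1 + eps n p.2.1, p.2.2)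

/-- the bimodule map `σ`: swaps the directions of the two legs. -/
noncomputable def sig (n : ℕ) : Poly2 n →ₗ[ℂ] Poly2 n :=
  LinearMap.funLeft ℂ ℂ fun p => (p.1, p.2.2, p.2.1)

noncomputable def ker2 (n : ℕ) : Submodule ℂ (Poly2 n) :=
  LinearMap.ker (sig n - LinearMap.id)

/-- `Ω²(A)`. -/
abbrev Om2 (n : ℕ) := Poly2 n ⧸ ker2 n

/-- the wedge product `Ω¹ × Ω¹ → Ω²`. -/
noncomputable def wdg (n : ℕ) (ω₁ ω₂ : Poly1 n) : Om2 n :=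
  (ker2 n).mkQ (tens n ω₁ ω₂)

/-- `X₁ = Σ_μ ξ_{μ→μ+1}`. -/
noncomputable def X1 (n : ℕ) : Poly1 n := fun e => if e.2 then 1 else 0

/-- `X₂ = Σ_μ ξ_{μ→μ−1}`. -/
noncomputable def X2 (n : ℕ) : Poly1 n := fun e => if e.2 then 0 else 1

/-- the graded vector space `ℂ ⊕ Ω¹ ⊕ Ω²` in which the ring of holomorphic
sections `R = ℂ·1 ⊕ span{X₁,X₂} ⊕ span{X₁∧X₂}` lives. -/
abbrev Wring (n : ℕ) := ℂ × Poly1 n × Om2 n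

/-- the multiplication on `ℂ ⊕ Ω¹ ⊕ Ω²` (wedge product; degree-0 scalars act by
scalar multiplication, degree ≥ 3 parts vanish). -/
noncomputable def Rmul (n : ℕ) (x y : Wring n) : Wring n :=
  (x.1 * y.1, x.1 • y.2.1 + y.1 • x.2.1, x.1 • y.2.2 + y.1 • x.2.2 + wdg n x.2.1 y.2.1)



lemma mem_ker2_iff (n : ℕ) (t : Poly2 n) :
    t ∈ ker2 n ↔ ∀ p : ZMod n × Bool × Bool, t (p.1, p.2.2, p.2.1) = t p := by
  constructor
  · intro h p
    have h' : sig n t - t = 0 := h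
    have := congrFun h' p
    simpa [sig, LinearMap.funLeft, sub_eq_zero] using this
  · intro h
    show sig n t - t = 0
    funext p
    simpa [sig, LinearMap.funLeft, sub_eq_zero] using h p

lemma wdg_eq_zero (n : ℕ) (ω η : Poly1 n)
    (h : ∀ p : ZMod n × Bool × Bool, tens n ω η (p.1, p.2.2, p.2.1) = tens n ω η p) :
    wdg n ω η = 0 := by
  rw [wdg, Submodule.mkQ_apply, Submodule.Quotient.mk_eq_zero]
  exact (mem_ker2_iff n _).2 h

lemma wdg_add_left (n : ℕ) (ω ω' η : Poly1 n) :
    wdg n (ω + ω') η = wdg n ω η + wdg n ω' η := by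
  rw [wdg, wdg, wdg, ← map_add]; congr 1; funext p; simp [tens]; ring

lemma wdg_add_right (n : ℕ) (ω η η' : Poly1 n) :
    wdg n ω (η + η') = wdg n ω η + wdg n ω η' := by
  rw [wdg, wdg, wdg, ← map_add]; congr 1; funext p; simp [tens]; ring

lemma wdg_smul_left (n : ℕ) (a : ℂ) (ω η : Poly1 n) :
    wdg n (a • ω) η = a • wdg n ω η := by
  rw [wdg, wdg, ← map_smul]; congr 1; funext p; simp [tens]; ring

lemma wdg_smul_right (n : ℕ) (a : ℂ) (ω η : Poly1 n) :
    wdg n ω (a • η) = a • wdg n ω η := by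
  rw [wdg, wdg, ← map_smul]; congr 1; funext p; simp [tens]; ring

@[simp] lemma wdg_zero_left (n : ℕ) (η : Poly1 n) : wdg n 0 η = 0 := by
  have := wdg_smul_left n 0 η η; simpa using this

@[simp] lemma wdg_zero_right (n : ℕ) (ω : Poly1 n) : wdg n ω 0 = 0 := by
  have := wdg_smul_right n 0 ω ω; simpa using this

lemma wdg_X1_X1 (n : ℕ) : wdg n (X1 n) (X1 n) = 0 :=
  wdg_eq_zero n _ _ fun ⟨μ, d₁, d₂⟩ => by cases d₁ <;> cases d₂ <;> simp [tens, X1]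

lemma wdg_X2_X2 (n : ℕ) : wdg n (X2 n) (X2 n) = 0 :=
  wdg_eq_zero n _ _ fun ⟨μ, d₁, d₂⟩ => by cases d₁ <;> cases d₂ <;> simp [tens, X2]

lemma wdg_X1_X2_add (n : ℕ) : wdg n (X1 n) (X2 n) + wdg n (X2 n) (X1 n) = 0 := by
  rw [wdg, wdg, ← map_add, Submodule.mkQ_apply, Submodule.Quotient.mk_eq_zero]
  refine (mem_ker2_iff n _).2 fun ⟨μ, d₁, d₂⟩ => ?_
  cases d₁ <;> cases d₂ <;> simp [tens, X1, X2]

lemma wdg_X1_X2_ne (n : ℕ) [NeZero n] : wdg n (X1 n) (X2 n) ≠ 0 := by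
  intro h
  rw [wdg, Submodule.mkQ_apply, Submodule.Quotient.mk_eq_zero, mem_ker2_iff] at h
  have := h (0, true, false)
  simp [tens, X1, X2] at this

-- the ring structure on Wring

noncomputable instance wringOne (n : ℕ) : One (Wring n) := ⟨(1, 0, 0)⟩
noncomputable instance wringMul (n : ℕ) : Mul (Wring n) := ⟨Rmul n⟩

lemma wring_mul_def (n : ℕ) (x y : Wring n) : x * y = Rmul n x y := rfl
lemma wring_one_def (n : ℕ) : (1 : Wring n) = (1, 0, 0) := rfl

noncomputable instance wringRing (n : ℕ) : Ring (Wring n) :=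
  { (inferInstance : AddCommGroup (Wring n)), wringOne n, wringMul n with
    left_distrib := fun x y z => by
      refine Prod.ext ?_ (Prod.ext ?_ ?_)
      · show x.1 * (y.1 + z.1) = x.1 * y.1 + x.1 * z.1; ring
      · show x.1 • (y.2.1 + z.2.1) + (y.1 + z.1) • x.2.1 =
          x.1 • y.2.1 + y.1 • x.2.1 + (x.1 • z.2.1 + z.1 • x.2.1)
        module
      · show x.1 • (y.2.2 + z.2.2) + (y.1 + z.1) • x.2.2 + wdg n x.2.1 (y.2.1 + z.2.1) =
          x.1 • y.2.2 + y.1 • x.2.2 + wdg n x.2.1 y.2.1 +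
            (x.1 • z.2.2 + z.1 • x.2.2 + wdg n x.2.1 z.2.1)
        rw [wdg_add_right]; module
    right_distrib := fun x y z => by
      refine Prod.ext ?_ (Prod.ext ?_ ?_)
      · show (x.1 + y.1) * z.1 = x.1 * z.1 + y.1 * z.1; ring
      · show (x.1 + y.1) • z.2.1 + z.1 • (x.2.1 + y.2.1) =
          x.1 • z.2.1 + z.1 • x.2.1 + (y.1 • z.2.1 + z.1 • y.2.1)
        module
      · show (x.1 + y.1) • z.2.2 + z.1 • (x.2.2 + y.2.2) + wdg n (x.2.1 + y.2.1) z.2.1 =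
          x.1 • z.2.2 + z.1 • x.2.2 + wdg n x.2.1 z.2.1 +
            (y.1 • z.2.2 + z.1 • y.2.2 + wdg n y.2.1 z.2.1)
        rw [wdg_add_left]; module
    zero_mul := fun x => by
      refine Prod.ext ?_ (Prod.ext ?_ ?_)
      · show (0 : ℂ) * x.1 = 0; ring
      · show (0 : ℂ) • x.2.1 + x.1 • (0 : Poly1 n) = 0; simp
      · show (0 : ℂ) • x.2.2 + x.1 • (0 : Om2 n) + wdg n 0 x.2.1 = 0; simp
    mul_zero := fun x => by
      refine Prod.ext ?_ (Prod.ext ?_ ?_)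
      · show x.1 * (0 : ℂ) = 0; ring
      · show x.1 • (0 : Poly1 n) + (0 : ℂ) • x.2.1 = 0; simp
      · show x.1 • (0 : Om2 n) + (0 : ℂ) • x.2.2 + wdg n x.2.1 0 = 0; simp
    mul_assoc := fun x y z => by
      refine Prod.ext ?_ (Prod.ext ?_ ?_)
      · show x.1 * y.1 * z.1 = x.1 * (y.1 * z.1); ring
      · show (x.1 * y.1) • z.2.1 + z.1 • (x.1 • y.2.1 + y.1 • x.2.1) =
          x.1 • (y.1 • z.2.1 + z.1 • y.2.1) + (y.1 * z.1) • x.2.1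
        module
      · show (x.1 * y.1) • z.2.2 + z.1 • (x.1 • y.2.2 + y.1 • x.2.2 + wdg n x.2.1 y.2.1) +
            wdg n (x.1 • y.2.1 + y.1 • x.2.1) z.2.1 =
          x.1 • (y.1 • z.2.2 + z.1 • y.2.2 + wdg n y.2.1 z.2.1) + (y.1 * z.1) • x.2.2 +
            wdg n x.2.1 (y.1 • z.2.1 + z.1 • y.2.1)
        rw [wdg_add_left, wdg_add_right, wdg_smul_left, wdg_smul_left,
          wdg_smul_right, wdg_smul_right]
        module
    one_mul := fun x => by
      refine Prod.ext ?_ (Prod.ext ?_ ?_)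
      · show (1 : ℂ) * x.1 = x.1; ring
      · show (1 : ℂ) • x.2.1 + x.1 • (0 : Poly1 n) = x.2.1; simp
      · show (1 : ℂ) • x.2.2 + x.1 • (0 : Om2 n) + wdg n 0 x.2.1 = x.2.2; simp
    mul_one := fun x => by
      refine Prod.ext ?_ (Prod.ext ?_ ?_)
      · show x.1 * (1 : ℂ) = x.1; ring
      · show x.1 • (0 : Poly1 n) + (1 : ℂ) • x.2.1 = x.2.1; simp
      · show x.1 • (0 : Om2 n) + (1 : ℂ) • x.2.2 + wdg n x.2.1 0 = x.2.2; simp }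

noncomputable instance wringAlgebra (n : ℕ) : Algebra ℂ (Wring n) :=
  Algebra.ofModule
    (fun r x y => by
      refine Prod.ext ?_ (Prod.ext ?_ ?_)
      · show r • x.1 * y.1 = r • (x.1 * y.1); simp [smul_eq_mul]; ring
      · show (r • x.1) • y.2.1 + y.1 • (r • x.2.1) = r • (x.1 • y.2.1 + y.1 • x.2.1)
        simp [smul_smul]; module
      · show (r • x.1) • y.2.2 + y.1 • (r • x.2.2) + wdg n (r • x.2.1) y.2.1 =
          r • (x.1 • y.2.2 + y.1 • x.2.2 + wdg n x.2.1 y.2.1)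
        rw [wdg_smul_left]; simp [smul_smul]; module)
    (fun r x y => by
      refine Prod.ext ?_ (Prod.ext ?_ ?_)
      · show x.1 * r • y.1 = r • (x.1 * y.1); simp [smul_eq_mul]; ring
      · show x.1 • (r • y.2.1) + (r • y.1) • x.2.1 = r • (x.1 • y.2.1 + y.1 • x.2.1)
        simp [smul_smul]; module
      · show x.1 • (r • y.2.2) + (r • y.1) • x.2.2 + wdg n x.2.1 (r • y.2.1) =
          r • (x.1 • y.2.2 + y.1 • x.2.2 + wdg n x.2.1 y.2.1)
        rw [wdg_smul_right]; simp [smul_smul]; module)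

lemma wring_algebraMap (n : ℕ) (r : ℂ) :
    algebraMap ℂ (Wring n) r = (r, 0, 0) := by
  show r • (1 : Wring n) = (r, 0, 0)
  refine Prod.ext ?_ (Prod.ext ?_ ?_) <;> simp [wring_one_def]

open ExteriorAlgebra in
noncomputable def fgen (n : ℕ) : (Fin 2 → ℂ) →ₗ[ℂ] Wring n where
  toFun v := (0, v 0 • X1 n + v 1 • X2 n, 0)
  map_add' v w := by
    refine Prod.ext ?_ (Prod.ext ?_ ?_) <;> simp <;> module
  map_smul' a v := by
    refine Prod.ext ?_ (Prod.ext ?_ ?_) <;> simp [smul_smul] <;> module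

lemma wdg_self (n : ℕ) (a b : ℂ) :
    wdg n (a • X1 n + b • X2 n) (a • X1 n + b • X2 n) = 0 := by
  have h := wdg_X1_X2_add n
  have h2 : wdg n (X2 n) (X1 n) = - wdg n (X1 n) (X2 n) := by
    rw [eq_neg_iff_add_eq_zero, add_comm]; exact h
  simp only [wdg_add_left, wdg_add_right, wdg_smul_left, wdg_smul_right,
    wdg_X1_X1, wdg_X2_X2, h2, smul_zero, smul_neg, add_zero, zero_add, smul_smul]
  module

lemma fgen_sq (n : ℕ) (v : Fin 2 → ℂ) : fgen n v * fgen n v = 0 := by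
  refine Prod.ext ?_ (Prod.ext ?_ ?_)
  · show (0 : ℂ) * 0 = 0; ring
  · show (0:ℂ) • _ + (0:ℂ) • _ = (0 : Poly1 n); simp
  · show (0:ℂ) • _ + (0:ℂ) • _ + wdg n (v 0 • X1 n + v 1 • X2 n) (v 0 • X1 n + v 1 • X2 n)
        = (0 : Om2 n)
    rw [wdg_self]; simp

noncomputable def Phi (n : ℕ) : ExteriorAlgebra ℂ (Fin 2 → ℂ) →ₐ[ℂ] Wring n :=
  ExteriorAlgebra.lift ℂ ⟨fgen n, fgen_sq n⟩

noncomputable abbrev e0 : Fin 2 → ℂ := Pi.single 0 1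
noncomputable abbrev e1 : Fin 2 → ℂ := Pi.single 1 1

lemma Phi_e0 (n : ℕ) : Phi n (ExteriorAlgebra.ι ℂ e0) = (0, X1 n, 0) := by
  rw [Phi, ExteriorAlgebra.lift_ι_apply]
  show (0, e0 0 • X1 n + e0 1 • X2 n, 0) = ((0 : ℂ), X1 n, (0 : Om2 n))
  norm_num [e0, Pi.single_eq_same, Pi.single_eq_of_ne]

lemma Phi_e1 (n : ℕ) : Phi n (ExteriorAlgebra.ι ℂ e1) = (0, X2 n, 0) := by
  rw [Phi, ExteriorAlgebra.lift_ι_apply]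
  show (0, e1 0 • X1 n + e1 1 • X2 n, 0) = ((0 : ℂ), X2 n, (0 : Om2 n))
  norm_num [e1, Pi.single_eq_same, Pi.single_eq_of_ne]

lemma Phi_e01 (n : ℕ) :
    Phi n (ExteriorAlgebra.ι ℂ e0 * ExteriorAlgebra.ι ℂ e1) = (0, 0, wdg n (X1 n) (X2 n)) := by
  rw [map_mul, Phi_e0, Phi_e1, wring_mul_def]
  refine Prod.ext ?_ (Prod.ext ?_ ?_) <;> simp [Rmul]

open ExteriorAlgebra

noncomputable def Sgen : Set (ExteriorAlgebra ℂ (Fin 2 → ℂ)) :=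
  {1, ι ℂ e0, ι ℂ e1, ι ℂ e0 * ι ℂ e1}

lemma mul_gen_mem : ∀ x ∈ Sgen, ∀ y ∈ Sgen, x * y ∈ Submodule.span ℂ Sgen := by
  have haa : ι ℂ e0 * ι ℂ e0 = 0 := ι_sq_zero e0
  have hbb : ι ℂ e1 * ι ℂ e1 = 0 := ι_sq_zero e1
  have hba : ι ℂ e1 * ι ℂ e0 = -(ι ℂ e0 * ι ℂ e1) := by
    rw [eq_neg_iff_add_eq_zero]; exact ExteriorAlgebra.ι_add_mul_swap (R := ℂ) e1 e0
  have hac : ι ℂ e0 * (ι ℂ e0 * ι ℂ e1) = 0 := by rw [← mul_assoc, haa, zero_mul]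
  have hbc : ι ℂ e1 * (ι ℂ e0 * ι ℂ e1) = 0 := by
    rw [← mul_assoc, hba, neg_mul, mul_assoc, hbb, mul_zero, neg_zero]
  have hca : (ι ℂ e0 * ι ℂ e1) * ι ℂ e0 = 0 := by
    rw [mul_assoc, hba, mul_neg, hac, neg_zero]
  have hcb : (ι ℂ e0 * ι ℂ e1) * ι ℂ e1 = 0 := by rw [mul_assoc, hbb, mul_zero]
  have hcc : (ι ℂ e0 * ι ℂ e1) * (ι ℂ e0 * ι ℂ e1) = 0 := by
    rw [← mul_assoc, hca, zero_mul]
  rintro x (rfl | rfl | rfl | rfl) y (rfl | rfl | rfl | rfl) <;>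
    (try simp only [one_mul, mul_one, haa, hbb, hba, hac, hbc, hca, hcb, hcc]) <;>
    first
      | exact Submodule.zero_mem _
      | exact neg_mem (Submodule.subset_span (by simp [Sgen]))
      | exact Submodule.subset_span (by simp [Sgen])

lemma mul_mem_span :
    ∀ x ∈ Submodule.span ℂ Sgen, ∀ y ∈ Submodule.span ℂ Sgen,
      x * y ∈ Submodule.span ℂ Sgen := by
  intro x hx
  induction hx using Submodule.span_induction with
  | mem u hu =>
    intro y hy
    induction hy using Submodule.span_induction with
    | mem v hv => exact mul_gen_mem u hu v hv
    | zero => simpa using Submodule.zero_mem _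
    | add v w _ _ h1 h2 => rw [mul_add]; exact add_mem h1 h2
    | smul a v _ h1 => rw [mul_smul_comm]; exact Submodule.smul_mem _ a h1
  | zero => intro y _; simpa using Submodule.zero_mem _
  | add u v _ _ h1 h2 => intro y hy; rw [add_mul]; exact add_mem (h1 y hy) (h2 y hy)
  | smul a u _ h1 => intro y hy; rw [smul_mul_assoc]; exact Submodule.smul_mem _ a (h1 y hy)

lemma span_Sgen_top : Submodule.span ℂ Sgen = ⊤ := by
  rw [eq_top_iff]
  rintro x -
  induction x using ExteriorAlgebra.induction with
  | algebraMap r =>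
    rw [Algebra.algebraMap_eq_smul_one]
    exact Submodule.smul_mem _ r (Submodule.subset_span (by simp [Sgen]))
  | ι v =>
    have hv : v = v 0 • e0 + v 1 • e1 := by
      funext i; fin_cases i <;> simp [e0, e1]
    rw [hv, map_add, map_smul, map_smul]
    exact add_mem (Submodule.smul_mem _ _ (Submodule.subset_span (by simp [Sgen])))
      (Submodule.smul_mem _ _ (Submodule.subset_span (by simp [Sgen])))
  | mul a b ha hb => exact mul_mem_span a ha b hb
  | add a b ha hb => exact add_mem ha hb

noncomputable def lam (n : ℕ) : Poly2 n →ₗ[ℂ] ℂ :=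
  (LinearMap.proj (R := ℂ) (φ := fun _ : ZMod n × Bool × Bool => ℂ) ((0 : ZMod n), true, false))
    - (LinearMap.proj (R := ℂ) (φ := fun _ : ZMod n × Bool × Bool => ℂ) ((0 : ZMod n), false, true))

lemma ker2_le_lam (n : ℕ) : ker2 n ≤ LinearMap.ker (lam n) := by
  intro t ht
  have := (mem_ker2_iff n t).1 ht ((0 : ZMod n), true, false)
  simp only [LinearMap.mem_ker, lam, LinearMap.sub_apply, LinearMap.proj_apply]
  rw [sub_eq_zero]
  exact this.symm

noncomputable def lamQ (n : ℕ) : Om2 n →ₗ[ℂ] ℂ :=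
  (ker2 n).liftQ (lam n) (ker2_le_lam n)

lemma lamQ_wdg (n : ℕ) : lamQ n (wdg n (X1 n) (X2 n)) = 1 := by
  rw [wdg, lamQ, Submodule.mkQ_apply, Submodule.liftQ_apply]
  simp [lam, tens, X1, X2]

noncomputable def Psi (n : ℕ) : Wring n → ExteriorAlgebra ℂ (Fin 2 → ℂ) :=
  fun x => algebraMap ℂ _ x.1 + x.2.1 ((0 : ZMod n), true) • ι ℂ e0 +
    x.2.1 ((0 : ZMod n), false) • ι ℂ e1 + lamQ n x.2.2 • (ι ℂ e0 * ι ℂ e1)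

lemma Psi_add (n : ℕ) (u w : Wring n) : Psi n (u + w) = Psi n u + Psi n w := by
  simp only [Psi, Prod.fst_add, Prod.snd_add, Pi.add_apply, RingHom.map_add,
    LinearMap.map_add, add_smul]
  abel

lemma Psi_smul (n : ℕ) (a : ℂ) (u : Wring n) : Psi n (a • u) = a • Psi n u := by
  simp only [Psi, Prod.smul_fst, Prod.smul_snd, Pi.smul_apply, LinearMap.map_smul, smul_eq_mul,
    Algebra.algebraMap_eq_smul_one, mul_smul, smul_add]

lemma Psi_Phi (n : ℕ) : ∀ x, Psi n (Phi n x) = x := by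
  have key : ∀ x ∈ Submodule.span ℂ Sgen, Psi n (Phi n x) = x := by
    intro x hx
    induction hx using Submodule.span_induction with
    | mem u hu =>
      rcases hu with rfl | rfl | rfl | rfl
      · rw [map_one]
        show Psi n (1, 0, 0) = 1
        simp only [Psi, Pi.zero_apply, map_zero, map_one, zero_smul, add_zero]
      · rw [Phi_e0]
        show Psi n ((0 : ℂ), X1 n, (0 : Om2 n)) = ι ℂ e0
        simp only [Psi, map_zero, zero_smul, add_zero, zero_add]
        norm_num [X1]
      · rw [Phi_e1]
        show Psi n ((0 : ℂ), X2 n, (0 : Om2 n)) = ι ℂ e1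
        simp only [Psi, map_zero, zero_smul, add_zero, zero_add]
        norm_num [X2]
      · rw [Phi_e01]
        show Psi n ((0 : ℂ), (0 : Poly1 n), wdg n (X1 n) (X2 n)) = ι ℂ e0 * ι ℂ e1
        simp only [Psi, Pi.zero_apply, map_zero, zero_smul, add_zero, zero_add, lamQ_wdg,
          one_smul]
    | zero =>
      rw [map_zero]
      show Psi n (0, 0, 0) = 0
      simp only [Psi, Pi.zero_apply, map_zero, zero_smul, add_zero, zero_add]
    | add u v _ _ h1 h2 => rw [map_add, Psi_add, h1, h2]
    | smul a u _ h1 => rw [map_smul, Psi_smul, h1]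
  intro x
  exact key x (span_Sgen_top ▸ Submodule.mem_top)

/-- `X₁∧X₁ = 0 = X₂∧X₂`, `X₁∧X₂ = −X₂∧X₁ ≠ 0`, and the graded ring
`R = ℂ·1 ⊕ span{X₁,X₂} ⊕ span{X₁∧X₂}` under the wedge product is isomorphic as a
graded ℂ-algebra to the exterior algebra `Λ•(ℂ²)`. -/
theorem stmt18 (n : ℕ) [NeZero n] (hn : 3 ≤ n) :
    wdg n (X1 n) (X1 n) = 0
  ∧ wdg n (X2 n) (X2 n) = 0
  ∧ wdg n (X1 n) (X2 n) = - wdg n (X2 n) (X1 n)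
  ∧ wdg n (X1 n) (X2 n) ≠ 0
  ∧ ∃ Φ : ExteriorAlgebra ℂ (Fin 2 → ℂ) →ₗ[ℂ] Wring n,
      Function.Injective Φ
    ∧ Φ 1 = (1, 0, 0)
    ∧ Φ (ExteriorAlgebra.ι ℂ (Pi.single (0 : Fin 2) (1 : ℂ))) = (0, X1 n, 0)
    ∧ Φ (ExteriorAlgebra.ι ℂ (Pi.single (1 : Fin 2) (1 : ℂ))) = (0, X2 n, 0)
    ∧ (∀ x y, Φ (x * y) = Rmul n (Φ x) (Φ y))
    ∧ LinearMap.range Φ = Submodule.span ℂ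
        ({((1 : ℂ), (0 : Poly1 n), (0 : Om2 n)), (0, X1 n, 0), (0, X2 n, 0),
          (0, 0, wdg n (X1 n) (X2 n))} : Set (Wring n)) := by
  refine ⟨wdg_X1_X1 n, wdg_X2_X2 n, ?_, wdg_X1_X2_ne n, (Phi n).toLinearMap,
    ?_, ?_, ?_, ?_, ?_, ?_⟩
  · rw [eq_neg_iff_add_eq_zero]; exact wdg_X1_X2_add n
  · intro x y h
    have := congrArg (Psi n) h
    rwa [AlgHom.toLinearMap_apply, AlgHom.toLinearMap_apply, Psi_Phi, Psi_Phi] at this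
  · show Phi n 1 = (1, 0, 0)
    rw [map_one, wring_one_def]
  · exact Phi_e0 n
  · exact Phi_e1 n
  · intro x y
    show Phi n (x * y) = _
    rw [map_mul, wring_mul_def]
    rfl
  · rw [LinearMap.range_eq_map, ← span_Sgen_top, Submodule.map_span]
    congr 1
    rw [Sgen, Set.image_insert_eq, Set.image_insert_eq, Set.image_insert_eq,
      Set.image_singleton]
    simp only [AlgHom.toLinearMap_apply, map_one, wring_one_def, Phi_e0, Phi_e1, Phi_e01]
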